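/- For every nonnegative integer t, the rational number 2/(1 + 4t) has odd greedy expansion of length exactly 2; specifically, its odd greedy expansion is 1/(1+2t) + 1/((1+2t)(1+4t)). -/

import Mathlib

/-- `a` is the denominator chosen by the odd greedy algorithm for remainder `q`:
`a = 1` if `q ≥ 1`, and otherwise `a` is the odd integer with `1/a ≤ q < 1/(a-2)`. -/
def IsOddGreedyStep (q : ℚ) (a : ℕ) : Prop :=
  Odd a ∧ ((a = 1 ∧ 1 ≤ q) ∨ (3 ≤ a ∧ (1 : ℚ) / a ≤ q ∧ q < 1 / ((a : ℚ) - 2)))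

/-- `x 0, …, x (m-1)` are the denominators of the odd greedy expansion of `q`,
which thus has length exactly `m`. -/
def IsOddGreedyExpansion (m : ℕ) (x : ℕ → ℕ) (q : ℚ) : Prop :=
  q = ∑ i ∈ Finset.range m, (1 : ℚ) / (x i) ∧
    ∀ i < m, IsOddGreedyStep (q - ∑ j ∈ Finset.range i, (1 : ℚ) / (x j)) (x i)

/-- for every nonnegative integer `t`, the odd greedy expansion of
`2/(1+4t)` has length exactly `2`, namely `1/(1+2t) + 1/((1+2t)(1+4t))`. -/
theorem stmt_5 (t : ℕ) :
    IsOddGreedyExpansion 2 (fun i => if i = 0 then 1 + 2 * t else (1 + 2 * t) * (1 + 4 * t))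
      (2 / (1 + 4 * (t : ℚ))) := by
  rcases Nat.eq_zero_or_pos t with ht | ht
  · subst ht
    refine ⟨by norm_num [Finset.sum_range_succ], ?_⟩
    intro i hi
    interval_cases i <;>
      simp [IsOddGreedyStep, Finset.sum_range_succ] <;> norm_num
  · have ht1 : (1:ℚ) ≤ (t:ℚ) := by exact_mod_cast ht
    have h1 : (0:ℚ) < 1 + 2 * (t:ℚ) := by linarith
    have h2 : (0:ℚ) < 1 + 4 * (t:ℚ) := by linarith
    constructor
    · simp only [Finset.sum_range_succ, Finset.sum_range_zero, eq_self_iff_true, if_true, zero_add,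
        one_ne_zero, if_false]
      push_cast
      field_simp
      ring
    · intro i hi
      interval_cases i
      · simp only [Finset.sum_range_zero, eq_self_iff_true, if_true, sub_zero]
        refine ⟨⟨t, by ring⟩, Or.inr ⟨by omega, ?_, ?_⟩⟩
        · rw [div_le_div_iff₀ (by push_cast; linarith) h2]
          push_cast; linarith
        · have h3 : (0:ℚ) < ((1 + 2*t : ℕ) : ℚ) - 2 := by push_cast; linarith
          rw [div_lt_div_iff₀ h2 h3]
          push_cast; linarith
      · simp only [Finset.sum_range_succ, Finset.sum_range_zero, zero_add,
          eq_self_iff_true, if_true, one_ne_zero, if_false]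
        refine ⟨⟨4*t^2 + 3*t, by ring⟩, Or.inr ⟨?_, le_of_eq ?_, ?_⟩⟩
        · have : 1 ≤ t := ht
          calc 3 ≤ 1 + 6*t + 8*t^2 := by nlinarith
          _ = (1+2*t)*(1+4*t) := by ring
        · push_cast
          field_simp
          ring
        · have h3 : (0:ℚ) < (((1+2*t)*(1+4*t) : ℕ) : ℚ) - 2 := by
            push_cast; nlinarith
          have key : (2:ℚ)/(1+4*(t:ℚ)) - 1/((1+2*t:ℕ):ℚ) = 1/(((1+2*t)*(1+4*t):ℕ):ℚ) := by
            push_cast; field_simp; ring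
          rw [key, div_lt_div_iff₀ (by push_cast; positivity) h3]
          push_cast; nlinarith
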